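/- With notation as above (G acting freely on X, L a G-selector, Ω_γ = (G_γ ∖ ⋃_{η<γ} G_η)·L for an increasing union G = ⋃_{ξ<k⁺} G_ξ of subgroups of cardinality ≤ k), and for T ⊆ k⁺ set E_T = ⋃_{γ∈T} Ω_γ. Then for every g ∈ G, the symmetric difference g·E_T Δ E_T is contained in a union of at most k sets of the form g'·L with g' ∈ G. Consequently, if 𝔍 is a k-additive G-invariant ideal containing L, then every set E_T is almost G-invariant with respect to 𝔍. -/

import Mathlib

open Set Cardinal Pointwise

universe u

variable {G X : Type u} [Group G] [MulAction G X]

/-- `Ω_γ = (G_γ \ ⋃_{η<γ} G_η) · L`. -/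
def Omega {ι : Type u} [LinearOrder ι] (Gs : ι → Subgroup G) (L : Set X)
    (γ : ι) : Set X :=
  ⋃ g ∈ ((Gs γ : Set G) \ ⋃ η ∈ Set.Iio γ, (Gs η : Set G)), g • L

/-- A class of sets is `k`-additive if closed under unions of at most `k` members. -/
def KAdd (k : Cardinal.{u}) (C : Set (Set X)) : Prop :=
  ∀ 𝒜 : Set (Set X), 𝒜 ⊆ C → #𝒜 ≤ k → ⋃₀ 𝒜 ∈ C

/-- An ideal of subsets of `X`. -/
def IsIdeal (J : Set (Set X)) : Prop :=
  ∅ ∈ J ∧ (∀ A B : Set X, B ∈ J → A ⊆ B → A ∈ J) ∧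
    (∀ A B : Set X, A ∈ J → B ∈ J → A ∪ B ∈ J)

/-- A `G`-invariant class of sets. -/
def Invar (G : Type u) [Group G] [MulAction G X] (C : Set (Set X)) : Prop :=
  ∀ (g : G), ∀ A ∈ C, g • A ∈ C

/-- for `E_T = ⋃_{γ∈T} Ω_γ`, every symmetric difference `g·E_T Δ E_T`
is covered by at most `k` translates of `L`; consequently, if `𝔍` is a `k`-additive
`G`-invariant ideal containing `L`, each `E_T` is almost `G`-invariant w.r.t. `𝔍`. -/

lemma smul_Omega {ι : Type u} [LinearOrder ι] (Gs : ι → Subgroup G) (hmono : Monotone Gs)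
    (L : Set X) {g : G} {ξ γ : ι} (hg : g ∈ Gs ξ) (hξγ : ξ < γ) :
    g • Omega Gs L γ = Omega Gs L γ := by
  have hStab : ∀ a : G, a ∈ Gs ξ → ∀ h : G,
      h ∈ ((Gs γ : Set G) \ ⋃ η ∈ Set.Iio γ, (Gs η : Set G)) →
      a * h ∈ ((Gs γ : Set G) \ ⋃ η ∈ Set.Iio γ, (Gs η : Set G)) := by
    intro a ha h hh
    obtain ⟨hh1, hh2⟩ := hh
    simp only [Set.mem_iUnion, Set.mem_Iio, not_exists, SetLike.mem_coe] at hh2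
    refine ⟨(Gs γ).mul_mem (hmono hξγ.le ha) hh1, fun hc => ?_⟩
    simp only [Set.mem_iUnion, Set.mem_Iio, SetLike.mem_coe] at hc
    obtain ⟨η, hη, hmem⟩ := hc
    rcases le_total ξ η with hle | hle
    · have h2 : a⁻¹ * (a * h) ∈ Gs η := (Gs η).mul_mem ((Gs η).inv_mem (hmono hle ha)) hmem
      rw [inv_mul_cancel_left] at h2
      exact hh2 η hη h2
    · have h2 : a⁻¹ * (a * h) ∈ Gs ξ := (Gs ξ).mul_mem ((Gs ξ).inv_mem ha) (hmono hle hmem)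
      rw [inv_mul_cancel_left] at h2
      exact hh2 ξ hξγ h2
  unfold Omega
  rw [Set.smul_set_iUnion₂]
  apply subset_antisymm
  · refine Set.iUnion₂_subset fun h hh => ?_
    rw [smul_smul]
    exact Set.subset_biUnion_of_mem (u := fun i => i • L) (hStab g hg h hh)
  · refine Set.iUnion₂_subset fun h hh => ?_
    have hgh := hStab g⁻¹ ((Gs ξ).inv_mem hg) h hh
    have hrw : h • L = g • (g⁻¹ * h) • L := by
      rw [smul_smul, mul_inv_cancel_left]
    rw [hrw]
    exact Set.subset_biUnion_of_mem (u := fun i => g • i • L) hgh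

theorem stmt_12 (k : Cardinal.{u}) (hk : ℵ₀ ≤ k)
    (hfree : ∀ (g : G) (x : X), g • x = x → g = 1)
    (L : Set X) (hL : ∀ x : X, ∃! y, y ∈ L ∩ MulAction.orbit G x)
    (Gs : (Order.succ k).ord.ToType → Subgroup G)
    (hmono : Monotone Gs) (hcover : ∀ g : G, ∃ ξ, g ∈ Gs ξ)
    (hcard : ∀ ξ, #(Gs ξ) ≤ k) :
    ∀ T : Set (Order.succ k).ord.ToType, ∀ g : G,
      (∃ D : Set G, #D ≤ k ∧
        symmDiff (g • ⋃ γ ∈ T, Omega Gs L γ) (⋃ γ ∈ T, Omega Gs L γ) ⊆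
          ⋃ g' ∈ D, g' • L) ∧
      (∀ J : Set (Set X), IsIdeal J → KAdd k J → Invar G J → L ∈ J →
        symmDiff (g • ⋃ γ ∈ T, Omega Gs L γ) (⋃ γ ∈ T, Omega Gs L γ) ∈ J) := by
  intro T g
  obtain ⟨ξ, hξ⟩ := hcover g
  set D : Set G := (g • (Gs ξ : Set G)) ∪ (Gs ξ : Set G) with hD
  have hsub : symmDiff (g • ⋃ γ ∈ T, Omega Gs L γ) (⋃ γ ∈ T, Omega Gs L γ) ⊆
      ⋃ g' ∈ D, g' • L := by
    rw [Set.smul_set_iUnion₂]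
    intro x hx
    rw [Set.mem_symmDiff] at hx
    rcases hx with ⟨hA, hB⟩ | ⟨hB, hA⟩
    · obtain ⟨γ, hγT, hxγ⟩ := by simpa using hA
      rcases lt_or_ge ξ γ with hlt | hle
      · exfalso
        rw [smul_Omega Gs hmono L hξ hlt] at hxγ
        exact hB (Set.mem_biUnion hγT hxγ)
      · obtain ⟨y, hy, rfl⟩ := hxγ
        obtain ⟨h, hh, hyh⟩ := by simpa [Omega] using hy
        have hhξ : h ∈ Gs ξ := hmono hle hh.1
        have hx : g • y ∈ (g * h) • L := by
          rw [← smul_smul]; exact Set.smul_mem_smul_set hyh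
        exact Set.mem_biUnion (Set.mem_union_left _ (Set.smul_mem_smul_set hhξ)) hx
    · obtain ⟨γ, hγT, hxγ⟩ := by simpa using hB
      rcases lt_or_ge ξ γ with hlt | hle
      · exfalso
        refine hA ?_
        refine Set.mem_biUnion hγT ?_
        rw [smul_Omega Gs hmono L hξ hlt]
        exact hxγ
      · obtain ⟨h, hh, hxh⟩ := by simpa [Omega] using hxγ
        have hhξ : h ∈ Gs ξ := hmono hle hh.1
        exact Set.mem_biUnion (Set.mem_union_right _ hhξ) hxh
  have hDcard : #D ≤ k := by
    have h1 : #(g • (Gs ξ : Set G) : Set G) = #(Gs ξ : Set G) := by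
      rw [← Set.image_smul]
      exact Cardinal.mk_image_eq (MulAction.injective g)
    have h2 : #(Gs ξ : Set G) ≤ k := hcard ξ
    calc #D ≤ #(g • (Gs ξ : Set G) : Set G) + #(Gs ξ : Set G) := Cardinal.mk_union_le _ _
      _ ≤ k + k := by rw [h1]; exact add_le_add h2 h2
      _ = k := Cardinal.add_eq_self hk
  constructor
  · exact ⟨D, hDcard, hsub⟩
  · intro J hJ hK hI hLJ
    have hmem : (⋃ g' ∈ D, g' • L) ∈ J := by
      have heq : (⋃ g' ∈ D, g' • L) = ⋃₀ ((fun g' : G => g' • L) '' D : Set (Set X)) := by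
        rw [Set.sUnion_image]
      rw [heq]
      refine hK _ ?_ ((Cardinal.mk_image_le).trans hDcard)
      rintro A ⟨g', -, rfl⟩
      exact hI g' L hLJ
    exact hJ.2.1 _ _ hmem hsub
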